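/- arXiv:2111.01832 — 3 statements merged into one kernel-verified Lean document; each statement's English description precedes it below -/
import Mathlib

section
/- Along any solution of the ODE ż = B(z), the Hamiltonian satisfies, for every t in the interval of definition, d/dt H(x_t, y_t) = -(α + β/x_t²) · y_t², which is ≤ 0; in particular t ↦ H(x_t, y_t) is nonincreasing. -/
open Real Set Filter

/-- The optimal-velocity function `V(x) = tanh(x-2) - tanh(-2)`. -/
noncomputable def V (x : ℝ) : ℝ := Real.tanh (x - 2) - Real.tanh (-2)

/-- Inverse hyperbolic tangent. -/
noncomputable def artanh (v : ℝ) : ℝ := (1 / 2) * Real.log ((1 + v) / (1 - v))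

/-- The equilibrium following distance `x_∞ = d (2 + artanh(v∘ + tanh(-2)))`. -/
noncomputable def xInf (d v₀ : ℝ) : ℝ := d * (2 + _root_.artanh (v₀ + Real.tanh (-2)))

/-- The potential `P(x) = α ∫_{x_∞}^x ( V(s/d) - v∘ ) ds`. -/
noncomputable def P (α d v₀ : ℝ) (x : ℝ) : ℝ :=
  α * ∫ s in (xInf d v₀)..x, (V (s / d) - v₀)

/-- The Hamiltonian `H(x,y) = y²/2 + P(x)`. -/
noncomputable def H (α d v₀ : ℝ) (x y : ℝ) : ℝ := y ^ 2 / 2 + P α d v₀ x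

/-- `IsSol α β d v₀ x y T` says that `t ↦ (x t, y t)` solves the ODE `ż = B(z)` on the
forward time interval `[0, T)`, staying in the state space `S = (0,∞) × ℝ`. -/
def IsSol (α β d v₀ : ℝ) (x y : ℝ → ℝ) (T : EReal) : Prop :=
  ∀ t : ℝ, 0 ≤ t → (t : EReal) < T →
    0 < x t ∧ HasDerivAt x (y t) t ∧
      HasDerivAt y (-α * (V (x t / d) - v₀ + y t) - β * y t / (x t) ^ 2) t

lemma hasDerivAt_P (α d v₀ p : ℝ) :
    HasDerivAt (P α d v₀) (α * (V (p / d) - v₀)) p := by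
  have hc : Continuous fun s : ℝ => V (s / d) - v₀ := by
    have htanh : Continuous Real.tanh := by
      have h : Real.tanh = fun x => Real.sinh x / Real.cosh x :=
        funext Real.tanh_eq_sinh_div_cosh
      rw [h]
      exact Real.continuous_sinh.div Real.continuous_cosh fun x => (Real.cosh_pos x).ne'
    unfold V
    exact ((htanh.comp ((continuous_id.div_const d).sub
      continuous_const)).sub continuous_const).sub continuous_const
  have h := (hc.integral_hasStrictDerivAt (xInf d v₀) p).hasDerivAt
  exact h.const_mul α

/-- along any solution of `ż = B(z)`, the Hamiltonian satisfies
`d/dt H(x_t,y_t) = -(α + β/x_t²) y_t² ≤ 0`; in particular `t ↦ H(x_t,y_t)` is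
nonincreasing on the interval of definition. -/
theorem hamiltonian_decreasing (α β d v₀ : ℝ) (hα : 0 < α) (hβ : 0 < β) (hd : 0 < d)
    (hv₀ : v₀ ∈ Set.Ioo 0 (1 + Real.tanh 2))
    (x y : ℝ → ℝ) (T : EReal) (hsol : IsSol α β d v₀ x y T) :
    (∀ t : ℝ, 0 ≤ t → (t : EReal) < T →
        HasDerivAt (fun s => H α d v₀ (x s) (y s))
          (-(α + β / (x t) ^ 2) * (y t) ^ 2) t ∧
        -(α + β / (x t) ^ 2) * (y t) ^ 2 ≤ 0) ∧
    AntitoneOn (fun t => H α d v₀ (x t) (y t)) {t : ℝ | 0 ≤ t ∧ (t : EReal) < T} := by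
  have key : ∀ t : ℝ, 0 ≤ t → (t : EReal) < T →
      HasDerivAt (fun s => H α d v₀ (x s) (y s))
        (-(α + β / (x t) ^ 2) * (y t) ^ 2) t ∧
      -(α + β / (x t) ^ 2) * (y t) ^ 2 ≤ 0 := by
    intro t ht hT
    obtain ⟨hx0, hx, hy⟩ := hsol t ht hT
    constructor
    · have h1 : HasDerivAt (fun s => (y s) ^ 2 / 2)
          ((2 * y t ^ 1 * (-α * (V (x t / d) - v₀ + y t) - β * y t / (x t) ^ 2)) / 2) t :=
        (hy.pow 2).div_const 2
      have h2 : HasDerivAt (fun s => P α d v₀ (x s))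
          (α * (V (x t / d) - v₀) * y t) t :=
        (hasDerivAt_P α d v₀ (x t)).comp t hx
      refine (h1.add h2).congr_deriv ?_
      ring
    · have hpos : 0 ≤ α + β / (x t) ^ 2 := by positivity
      have : 0 ≤ (α + β / (x t) ^ 2) * (y t) ^ 2 := by positivity
      linarith
  refine ⟨key, ?_⟩
  set D := {t : ℝ | 0 ≤ t ∧ (t : EReal) < T} with hD
  have hconv : Convex ℝ D := by
    rw [convex_iff_ordConnected]
    constructor
    intro a ha b hb c hc
    exact ⟨le_trans ha.1 hc.1, lt_of_le_of_lt (by exact_mod_cast hc.2) hb.2⟩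
  apply antitoneOn_of_deriv_nonpos hconv
  · intro t ht
    exact (key t ht.1 ht.2).1.continuousAt.continuousWithinAt
  · intro t ht
    have ht' := interior_subset ht
    exact ((key t ht'.1 ht'.2).1.differentiableAt).differentiableWithinAt
  · intro t ht
    have ht' := interior_subset ht
    rw [(key t ht'.1 ht'.2).1.deriv]
    exact (key t ht'.1 ht'.2).2
end

section
/- Let t ↦ (x_t, y_t) be the unique solution of the ODE ż = B(z) on its maximal forward interval of definition [0, 𝒯), with initial condition (x∘, y∘) ∈ S. Then the function t ↦ H(x_t, y_t) is strictly decreasing on [0, 𝒯) if and only if (x∘, y∘) ≠ (x_∞, 0). -/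
open Real Set Filter

/-- `[0, T)` is the maximal forward interval of definition: the solution admits no
extension to a strictly larger forward interval with the same initial condition. -/
def IsMaximal (α β d v₀ : ℝ) (x y : ℝ → ℝ) (T : EReal) : Prop :=
  ∀ (T' : EReal) (x' y' : ℝ → ℝ), T < T' → IsSol α β d v₀ x' y' T' →
    x' 0 = x 0 → y' 0 = y 0 → False

lemma tanh_hasDerivAt (x : ℝ) : HasDerivAt Real.tanh (1 / Real.cosh x ^ 2) x := by
  have h := (Real.hasDerivAt_sinh x).div (Real.hasDerivAt_cosh x) (ne_of_gt (Real.cosh_pos x))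
  have he : Real.tanh = fun z => Real.sinh z / Real.cosh z := by
    funext z; exact Real.tanh_eq_sinh_div_cosh z
  rw [he]
  refine h.congr_deriv ?_
  have := Real.cosh_sq_sub_sinh_sq x
  field_simp
  nlinarith [this]

lemma tanh_strictMono : StrictMono Real.tanh := by
  apply strictMono_of_deriv_pos
  intro x
  rw [(tanh_hasDerivAt x).deriv]
  positivity

lemma tanh_lipschitz (a b : ℝ) : |Real.tanh a - Real.tanh b| ≤ |a - b| := by
  have h : LipschitzWith 1 Real.tanh := by
    apply lipschitzWith_of_nnnorm_deriv_le (fun x => (tanh_hasDerivAt x).differentiableAt)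
    intro x
    rw [(tanh_hasDerivAt x).deriv]
    have h1 : (1:ℝ) ≤ Real.cosh x := Real.one_le_cosh x
    have : |1 / Real.cosh x ^ 2| ≤ 1 := by
      rw [abs_of_pos (by positivity)]
      rw [div_le_one (by positivity)]
      nlinarith
    rw [← NNReal.coe_le_coe, coe_nnnorm, Real.norm_eq_abs]
    simpa using this
  simpa [Real.dist_eq] using h.dist_le_mul a b

lemma tanh_lt_one' (x : ℝ) : Real.tanh x < 1 := by
  rw [Real.tanh_eq_sinh_div_cosh, div_lt_one (Real.cosh_pos x), Real.sinh_eq, Real.cosh_eq]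
  have := Real.exp_pos (-x)
  linarith

lemma tanh_neg' (x : ℝ) : Real.tanh (-x) = -Real.tanh x := by
  rw [Real.tanh_eq_sinh_div_cosh, Real.tanh_eq_sinh_div_cosh, Real.sinh_neg, Real.cosh_neg,
    neg_div]

lemma tanh_artanh {w : ℝ} (h1 : -1 < w) (h2 : w < 1) : Real.tanh (_root_.artanh w) = w := by
  have hw1 : (0:ℝ) < 1 - w := by linarith
  have hw2 : (0:ℝ) < 1 + w := by linarith
  have hu : (0:ℝ) < (1 + w) / (1 - w) := div_pos hw2 hw1
  have hE : Real.exp (_root_.artanh w) * Real.exp (_root_.artanh w) = (1 + w) / (1 - w) := by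
    rw [← Real.exp_add, _root_.artanh,
      show (1/2) * Real.log ((1+w)/(1-w)) + (1/2) * Real.log ((1+w)/(1-w))
        = Real.log ((1+w)/(1-w)) by ring]
    exact Real.exp_log hu
  have hE' : Real.exp (_root_.artanh w) * Real.exp (_root_.artanh w) * (1 - w) = 1 + w := by
    rw [hE]; field_simp
  have hEpos := Real.exp_pos (_root_.artanh w)
  rw [Real.tanh_eq_sinh_div_cosh, Real.sinh_eq, Real.cosh_eq, Real.exp_neg,
    div_div_div_cancel_right₀, div_eq_iff (by positivity)]
  · field_simp
    nlinarith [hE', hEpos]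
  · norm_num

lemma continuous_tanh' : Continuous Real.tanh :=
  Differentiable.continuous fun x => (tanh_hasDerivAt x).differentiableAt

lemma continuous_V : Continuous V :=
  (continuous_tanh'.comp (continuous_id.sub continuous_const)).sub continuous_const

lemma V_mono : Monotone V := fun a b hab =>
  sub_le_sub_right ((tanh_strictMono.monotone) (sub_le_sub_right hab 2)) _

lemma V_inj : Function.Injective V := by
  intro a b hab
  have h : Real.tanh (a - 2) = Real.tanh (b - 2) := by
    have : Real.tanh (a-2) - Real.tanh (-2) = Real.tanh (b-2) - Real.tanh (-2) := hab
    linarith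
  have := tanh_strictMono.injective h
  linarith

lemma V_xInf {d v₀ : ℝ} (hd : 0 < d) (hv₀ : v₀ ∈ Set.Ioo 0 (1 + Real.tanh 2)) :
    V (xInf d v₀ / d) = v₀ := by
  have h2 : Real.tanh (-2) = -Real.tanh 2 := tanh_neg' 2
  have hlt : Real.tanh 2 < 1 := tanh_lt_one' 2
  have hw1 : -1 < v₀ + Real.tanh (-2) := by rw [h2]; obtain ⟨h, _⟩ := hv₀; linarith
  have hw2 : v₀ + Real.tanh (-2) < 1 := by rw [h2]; obtain ⟨_, h⟩ := hv₀; linarith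
  have hx : xInf d v₀ / d = 2 + _root_.artanh (v₀ + Real.tanh (-2)) := by
    rw [xInf]; field_simp
  rw [hx, V, show 2 + _root_.artanh (v₀ + Real.tanh (-2)) - 2 = _root_.artanh (v₀ + Real.tanh (-2)) by ring,
    tanh_artanh hw1 hw2]
  ring

lemma P_hasDerivAt (α : ℝ) {d : ℝ} (v₀ : ℝ) (hd : 0 < d) (z : ℝ) :
    HasDerivAt (P α d v₀) (α * (V (z / d) - v₀)) z := by
  have hg : Continuous fun s : ℝ => V (s / d) - v₀ :=
    (continuous_V.comp (continuous_id.div_const d)).sub continuous_const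
  have h := intervalIntegral.integral_hasDerivAt_right
    (hg.intervalIntegrable (xInf d v₀) z)
    (hg.stronglyMeasurableAtFilter MeasureTheory.volume (nhds z))
    hg.continuousAt
  exact HasDerivAt.const_mul α h

lemma P_nonneg {α d v₀ : ℝ} (hα : 0 ≤ α) (hd : 0 < d)
    (hv₀ : v₀ ∈ Set.Ioo 0 (1 + Real.tanh 2)) (z : ℝ) : 0 ≤ P α d v₀ z := by
  have hVx := V_xInf hd hv₀
  rcases le_total (xInf d v₀) z with hle | hle
  · refine mul_nonneg hα (intervalIntegral.integral_nonneg hle fun u hu => ?_)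
    have : V (xInf d v₀ / d) ≤ V (u / d) :=
      V_mono (div_le_div_of_nonneg_right hu.1 hd.le)
    rw [hVx] at this; linarith
  · rw [P, intervalIntegral.integral_symm, ← intervalIntegral.integral_neg]
    refine mul_nonneg hα (intervalIntegral.integral_nonneg hle fun u hu => ?_)
    have : V (u / d) ≤ V (xInf d v₀ / d) :=
      V_mono (div_le_div_of_nonneg_right hu.2 hd.le)
    rw [hVx] at this; simp; linarith

lemma P_xInf (α d v₀ : ℝ) : P α d v₀ (xInf d v₀) = 0 := by
  rw [P, intervalIntegral.integral_same, mul_zero]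

lemma ham_hasDerivAt {α β d v₀ : ℝ} (hd : 0 < d) {x y : ℝ → ℝ} {t : ℝ}
    (hx' : HasDerivAt x (y t) t)
    (hy' : HasDerivAt y (-α * (V (x t / d) - v₀ + y t) - β * y t / (x t) ^ 2) t) :
    HasDerivAt (fun s => H α d v₀ (x s) (y s))
      (-(α + β / (x t) ^ 2) * (y t) ^ 2) t := by
  have h2 := (hy'.pow 2).div_const 2
  have h3 : HasDerivAt (fun s => P α d v₀ (x s)) (α * (V (x t / d) - v₀) * y t) t := by
    have := (P_hasDerivAt α v₀ hd (x t)).comp t hx'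
    exact this
  have hsum := h2.add h3
  have heq : (fun s => H α d v₀ (x s) (y s))
      = fun s => (y s) ^ 2 / 2 + P α d v₀ (x s) := rfl
  rw [heq]
  refine hsum.congr_deriv ?_
  push_cast
  ring

set_option maxHeartbeats 2000000 in
lemma back_to_init {α β d v₀ : ℝ} (hα : 0 < α) (hβ : 0 < β) (hd : 0 < d)
    (hv₀ : v₀ ∈ Set.Ioo 0 (1 + Real.tanh 2))
    {x y : ℝ → ℝ} {T : EReal} (hsol : IsSol α β d v₀ x y T)
    {τ : ℝ} (hτ0 : 0 ≤ τ) (hτT : (τ : EReal) < T)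
    (hxτ : x τ = xInf d v₀) (hyτ : y τ = 0) : x 0 = xInf d v₀ ∧ y 0 = 0 := by
  set xe := xInf d v₀ with hxedef
  have hmemS : ∀ t ∈ Icc (0:ℝ) τ, 0 ≤ t ∧ (t : EReal) < T := fun t ht =>
    ⟨ht.1, lt_of_le_of_lt (EReal.coe_le_coe_iff.mpr ht.2) hτT⟩
  have hxc : ContinuousOn x (Icc 0 τ) := fun t ht =>
    ((hsol t (hmemS t ht).1 (hmemS t ht).2).2.1.continuousAt.continuousWithinAt)
  obtain ⟨tm, htm, hminOn⟩ := isCompact_Icc.exists_isMinOn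
    (nonempty_Icc.mpr hτ0) hxc
  set m := x tm with hmdef
  have hmpos : 0 < m := (hsol tm (hmemS tm htm).1 (hmemS tm htm).2).1
  set C := 1 + α / d + 2 * α + 2 * β / m ^ 2 with hCdef
  set w : ℝ → ℝ := fun t => (x t - xe) ^ 2 + (y t) ^ 2 with hwdef
  set yd : ℝ → ℝ := fun t => -α * (V (x t / d) - v₀ + y t) - β * y t / (x t) ^ 2 with hyddef
  set wd : ℝ → ℝ := fun t => 2 * (x t - xe) * y t + 2 * y t * yd t with hwddef
  set g : ℝ → ℝ := fun t => Real.exp (C * t) * w t with hgdef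
  have hVx : V (xe / d) = v₀ := V_xInf hd hv₀
  have hgd : ∀ t ∈ Icc (0:ℝ) τ, HasDerivAt g (Real.exp (C * t) * (C * w t + wd t)) t := by
    intro t ht
    obtain ⟨hxp, hx', hy'⟩ := hsol t (hmemS t ht).1 (hmemS t ht).2
    have hwd : HasDerivAt w (wd t) t := by
      have h1 := (hx'.sub_const xe).pow 2
      have h2 := hy'.pow 2
      have := h1.add h2
      refine this.congr_deriv ?_
      push_cast
      simp only [hwddef, hyddef]
      ring
    have he : HasDerivAt (fun s => Real.exp (C * s)) (Real.exp (C * t) * C) t := by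
      simpa using ((hasDerivAt_id t).const_mul C).exp
    have := he.mul hwd
    refine this.congr_deriv ?_
    ring
  have hnn : ∀ t ∈ Icc (0:ℝ) τ, 0 ≤ C * w t + wd t := by
    intro t ht
    obtain ⟨hxp, _, _⟩ := hsol t (hmemS t ht).1 (hmemS t ht).2
    have hmle : m ≤ x t := hminOn ht
    set A := x t - xe with hA
    set Y := y t with hY
    have hVb : |V (x t / d) - v₀| ≤ |A| / d := by
      rw [← hVx]
      have h := tanh_lipschitz (x t / d - 2) (xe / d - 2)
      have h2 : (x t / d - 2) - (xe / d - 2) = A / d := by rw [hA]; ring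
      rw [h2, abs_div, abs_of_pos hd] at h
      have h3 : V (x t / d) - V (xe / d)
          = Real.tanh (x t / d - 2) - Real.tanh (xe / d - 2) := by
        simp only [V]; ring
      rw [h3]
      exact h
    set Vb := V (x t / d) - v₀ with hVbdef
    have f1 : -(A ^ 2 + Y ^ 2) ≤ 2 * A * Y := by nlinarith [sq_nonneg (A + Y)]
    have t1 : Vb * Y ≤ (|A| / d) * |Y| := by
      calc Vb * Y ≤ |Vb * Y| := le_abs_self _
        _ = |Vb| * |Y| := abs_mul _ _
        _ ≤ (|A| / d) * |Y| := mul_le_mul_of_nonneg_right hVb (abs_nonneg _)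
    have t3 : (|A| / d) * |Y| ≤ (A ^ 2 + Y ^ 2) / (2 * d) := by
      have h4 : 2 * (|A| * |Y|) ≤ A ^ 2 + Y ^ 2 := by
        nlinarith [sq_abs A, sq_abs Y, sq_nonneg (|A| - |Y|)]
      rw [div_mul_eq_mul_div, div_le_div_iff₀ hd (by positivity)]
      nlinarith [h4]
    have f2 : 2 * α * (Vb * Y) ≤ (α / d) * (A ^ 2 + Y ^ 2) := by
      have h5 := mul_le_mul_of_nonneg_left (t1.trans t3) (by positivity : (0:ℝ) ≤ 2 * α)
      have h6 : 2 * α * ((A ^ 2 + Y ^ 2) / (2 * d)) = (α / d) * (A ^ 2 + Y ^ 2) := by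
        field_simp
      linarith [h5, h6.le]
    have f3 : β * Y ^ 2 / (x t) ^ 2 ≤ β * Y ^ 2 / m ^ 2 :=
      div_le_div_of_nonneg_left (by positivity) (by positivity)
        (by nlinarith [hmle, hmpos])
    have e1 : 0 ≤ 2 * β / m ^ 2 * A ^ 2 := by positivity
    have e2 : 0 ≤ α * A ^ 2 := by positivity
    have hexp : wd t = 2 * A * Y - 2 * α * (Vb * Y) - 2 * α * Y ^ 2
        - 2 * (β * Y ^ 2 / (x t) ^ 2) := by
      simp only [hwddef, hyddef, hA, hY, hVbdef]
      ring
    have hwt : w t = A ^ 2 + Y ^ 2 := rfl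
    rw [hexp, hwt, hCdef]
    have hsplit : (1 + α / d + 2 * α + 2 * β / m ^ 2) * (A ^ 2 + Y ^ 2)
        = (A ^ 2 + Y ^ 2) + (α / d) * (A ^ 2 + Y ^ 2) + 2 * α * (A ^ 2 + Y ^ 2)
          + (2 * β / m ^ 2 * A ^ 2 + 2 * (β * Y ^ 2 / m ^ 2)) := by
      ring
    rw [hsplit]
    clear_value A Y Vb m C w yd wd g
    linarith [f1, f2, f3, e1, e2]
  clear_value m C w yd wd g
  have hmono : MonotoneOn g (Icc 0 τ) := by
    apply monotoneOn_of_deriv_nonneg (convex_Icc 0 τ)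
    · intro t ht
      exact (hgd t ht).continuousAt.continuousWithinAt
    · intro t ht
      rw [interior_Icc] at ht
      exact ((hgd t (Ioo_subset_Icc_self ht)).differentiableAt).differentiableWithinAt
    · intro t ht
      rw [interior_Icc] at ht
      rw [(hgd t (Ioo_subset_Icc_self ht)).deriv]
      exact mul_nonneg (Real.exp_pos _).le (hnn t (Ioo_subset_Icc_self ht))
  have h0τ : g 0 ≤ g τ := hmono (left_mem_Icc.mpr hτ0) (right_mem_Icc.mpr hτ0) hτ0
  have hwτ : w τ = 0 := by simp [hwdef, hxτ, hyτ]
  have hgτ : g τ = 0 := by rw [hgdef]; simp [hwτ]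
  have hg0 : g 0 = w 0 := by simp [hgdef]
  have hw0 : w 0 = 0 := by
    have : w 0 ≤ 0 := by rw [← hg0]; rw [hgτ] at h0τ; exact h0τ
    have h7 : 0 ≤ w 0 := by
      rw [hwdef]; positivity
    linarith
  have hx0 : (x 0 - xe) ^ 2 = 0 := by
    have := sq_nonneg (x 0 - xe); have := sq_nonneg (y 0)
    simp only [hwdef] at hw0
    linarith
  have hy0 : (y 0) ^ 2 = 0 := by
    have := sq_nonneg (x 0 - xe); have := sq_nonneg (y 0)
    simp only [hwdef] at hw0
    linarith
  constructor
  · have := pow_eq_zero_iff (two_ne_zero (α := ℕ)) |>.mp hx0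
    linarith
  · exact pow_eq_zero_iff (two_ne_zero (α := ℕ)) |>.mp hy0


set_option maxHeartbeats 2000000 in
/-- `t ↦ H(x_t, y_t)` is strictly decreasing on `[0, 𝒯)` if and only if
`(x∘, y∘) ≠ (x_∞, 0)`. -/
theorem hamiltonian_strictly_decreasing_iff (α β d v₀ : ℝ)
    (hα : 0 < α) (hβ : 0 < β) (hd : 0 < d)
    (hv₀ : v₀ ∈ Set.Ioo 0 (1 + Real.tanh 2))
    (x y : ℝ → ℝ) (T : EReal) (hT : 0 < T)
    (x₀ y₀ : ℝ) (hx₀ : 0 < x₀) (hinit : x 0 = x₀ ∧ y 0 = y₀)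
    (hsol : IsSol α β d v₀ x y T) (hmax : IsMaximal α β d v₀ x y T) :
    StrictAntiOn (fun t => H α d v₀ (x t) (y t)) {t : ℝ | 0 ≤ t ∧ (t : EReal) < T} ↔
      (x₀, y₀) ≠ (xInf d v₀, 0) := by
  obtain ⟨hix, hiy⟩ := hinit
  subst hix; subst hiy
  constructor
  · intro hsa heq
    rw [Prod.mk.injEq] at heq
    obtain ⟨he1, he2⟩ := heq
    obtain ⟨c, hc0, hcT⟩ := exists_between hT
    lift c to ℝ using ⟨ne_top_of_lt hcT, ne_bot_of_gt hc0⟩ with c hc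
    have hcpos : (0:ℝ) < c := by exact_mod_cast hc0
    have h0S : (0:ℝ) ∈ {t : ℝ | 0 ≤ t ∧ (t : EReal) < T} := ⟨le_refl 0, by exact_mod_cast hT⟩
    have hcS : c ∈ {t : ℝ | 0 ≤ t ∧ (t : EReal) < T} := ⟨hcpos.le, hcT⟩
    have hlt := hsa h0S hcS hcpos
    have hH0 : H α d v₀ (x 0) (y 0) = 0 := by
      rw [he1, he2, H, P_xInf]; norm_num
    have hHc : 0 ≤ H α d v₀ (x c) (y c) :=
      add_nonneg (by positivity) (P_nonneg hα.le hd hv₀ _)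
    simp only [hH0] at hlt
    exact absurd hlt (not_lt.mpr hHc)
  · intro hne a ha b hb hab
    have hsub : Icc a b ⊆ {t : ℝ | 0 ≤ t ∧ (t : EReal) < T} := fun t ht =>
      ⟨ha.1.trans ht.1, lt_of_le_of_lt (EReal.coe_le_coe_iff.mpr ht.2) hb.2⟩
    have hders : ∀ t ∈ Icc a b,
        HasDerivAt (fun s => H α d v₀ (x s) (y s)) (-(α + β / (x t) ^ 2) * (y t) ^ 2) t := by
      intro t ht
      obtain ⟨hxp, hx', hy'⟩ := hsol t (hsub ht).1 (hsub ht).2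
      exact ham_hasDerivAt hd hx' hy'
    have hanti : AntitoneOn (fun t => H α d v₀ (x t) (y t)) (Icc a b) := by
      apply antitoneOn_of_deriv_nonpos (convex_Icc a b)
      · intro t ht
        exact (hders t ht).continuousAt.continuousWithinAt
      · intro t ht
        rw [interior_Icc] at ht
        exact (hders t (Ioo_subset_Icc_self ht)).differentiableAt.differentiableWithinAt
      · intro t ht
        rw [interior_Icc] at ht
        rw [(hders t (Ioo_subset_Icc_self ht)).deriv]
        have hxp := (hsol t (hsub (Ioo_subset_Icc_self ht)).1 (hsub (Ioo_subset_Icc_self ht)).2).1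
        have h1 : 0 ≤ α + β / (x t) ^ 2 := by positivity
        have h2 : 0 ≤ (y t) ^ 2 := sq_nonneg _
        nlinarith
    have hle := hanti (left_mem_Icc.mpr hab.le) (right_mem_Icc.mpr hab.le) hab.le
    rcases hle.lt_or_eq with hlt | heq2
    · exact hlt
    · exfalso
      have hconst : ∀ t ∈ Icc a b, H α d v₀ (x t) (y t) = H α d v₀ (x a) (y a) := by
        intro t ht
        refine le_antisymm (hanti (left_mem_Icc.mpr hab.le) ht ht.1) ?_
        have := hanti ht (right_mem_Icc.mpr hab.le) ht.2
        rw [heq2] at this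
        exact this
      have hy0' : ∀ t ∈ Ioo a b, y t = 0 := by
        intro t ht
        have hSt := hsub (Ioo_subset_Icc_self ht)
        obtain ⟨hxp, hx', hy'⟩ := hsol t hSt.1 hSt.2
        have hdh := ham_hasDerivAt hd hx' hy'
        have hdh0 : HasDerivAt (fun s => H α d v₀ (x s) (y s)) 0 t := by
          have hev : (fun s => H α d v₀ (x s) (y s)) =ᶠ[nhds t]
              (fun _ => H α d v₀ (x a) (y a)) := by
            filter_upwards [Ioo_mem_nhds ht.1 ht.2] with u hu
            exact hconst u (Ioo_subset_Icc_self hu)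
          exact (hasDerivAt_const t _).congr_of_eventuallyEq hev
        have huniq := hdh.unique hdh0
        have hpos : 0 < α + β / (x t) ^ 2 := by positivity
        have hy2 : (y t) ^ 2 = 0 := by
          rcases eq_or_lt_of_le (sq_nonneg (y t)) with h | h
          · exact h.symm
          · nlinarith
        exact pow_eq_zero_iff (two_ne_zero (α := ℕ)) |>.mp hy2
      set τ := (a + b) / 2 with hτdef
      have hτmem : τ ∈ Ioo a b := ⟨by rw [hτdef]; linarith, by rw [hτdef]; linarith⟩
      have hSτ := hsub (Ioo_subset_Icc_self hτmem)
      obtain ⟨hxpτ, hx'τ, hy'τ⟩ := hsol τ hSτ.1 hSτ.2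
      have hy0τ : HasDerivAt y 0 τ := by
        have hev : y =ᶠ[nhds τ] (fun _ => 0) := by
          filter_upwards [Ioo_mem_nhds hτmem.1 hτmem.2] with u hu
          exact hy0' u hu
        exact (hasDerivAt_const τ (0:ℝ)).congr_of_eventuallyEq hev
      have heq3 := hy'τ.unique hy0τ
      rw [hy0' τ hτmem] at heq3
      have hVeq : V (x τ / d) = v₀ := by
        have h9 : -α * (V (x τ / d) - v₀ + 0) - β * 0 / (x τ) ^ 2 = 0 := heq3
        have h10 : α * (V (x τ / d) - v₀) = 0 := by
          rw [mul_zero, zero_div] at h9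
          linarith [h9]
        have := mul_eq_zero.mp h10
        rcases this with h | h
        · exact absurd h (ne_of_gt hα)
        · linarith
      have hxτ : x τ = xInf d v₀ := by
        have h11 : V (x τ / d) = V (xInf d v₀ / d) := by
          rw [hVeq, V_xInf hd hv₀]
        have h12 := V_inj h11
        field_simp at h12
        exact h12
      obtain ⟨hbx0, hby0⟩ :=
        back_to_init hα hβ hd hv₀ hsol hSτ.1 hSτ.2 hxτ (hy0' τ hτmem)
      exact hne (by rw [Prod.mk.injEq]; exact ⟨hbx0, hby0⟩)
end

section
/- Let t ↦ (x_t, y_t) be the unique solution of the ODE ż = B(z) on its maximal forward interval [0, 𝒯), with initial condition (x∘, y∘) ∈ S. If 𝒯 < ∞, then lim_{t → 𝒯⁻} x_t = 0; i.e., a finite maximal time of definition forces collision with the boundary {0} × ℝ. -/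
open Real Set Filter Topology

lemma abs_tanh_le_one (x : ℝ) : |Real.tanh x| ≤ 1 := by
  rw [Real.tanh_eq_sinh_div_cosh, abs_div, abs_of_pos (Real.cosh_pos x),
    div_le_one (Real.cosh_pos x)]
  have h1 := Real.cosh_sq x
  have h2 := Real.cosh_pos x
  have h3 := sq_abs (Real.sinh x)
  nlinarith [abs_nonneg (Real.sinh x)]

lemma contDiff_tanh : ContDiff ℝ 1 Real.tanh := by
  have : Real.tanh = fun x => Real.sinh x / Real.cosh x :=
    funext fun x => Real.tanh_eq_sinh_div_cosh x
  rw [this]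
  exact Real.contDiff_sinh.div Real.contDiff_cosh fun x => (Real.cosh_pos x).ne'

lemma abs_V_le (x : ℝ) : |V x| ≤ 2 := by
  have h1 := abs_tanh_le_one (x - 2)
  have h2 := abs_tanh_le_one (-2)
  unfold V
  calc |Real.tanh (x - 2) - Real.tanh (-2)| ≤ |Real.tanh (x-2)| + |Real.tanh (-2)| :=
        abs_sub _ _
    _ ≤ 2 := by linarith

noncomputable def Bf (α β d v₀ : ℝ) (p : ℝ × ℝ) : ℝ × ℝ :=
  (p.2, -α * (V (p.1 / d) - v₀ + p.2) - β * p.2 / p.1 ^ 2)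

lemma contDiffOn_Bf (α β d v₀ : ℝ) :
    ContDiffOn ℝ 1 (Bf α β d v₀) {p : ℝ × ℝ | 0 < p.1} := by
  apply ContDiffOn.prodMk
  · exact contDiff_snd.contDiffOn
  · apply ContDiffOn.sub
    · apply ContDiffOn.mul contDiffOn_const
      apply ContDiffOn.add ?_ contDiff_snd.contDiffOn
      apply ContDiffOn.sub ?_ contDiffOn_const
      have : ContDiff ℝ 1 fun p : ℝ × ℝ => V (p.1 / d) := by
        unfold V
        apply ContDiff.sub ?_ contDiff_const
        exact contDiff_tanh.comp ((contDiff_fst.div_const d).sub contDiff_const)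
      exact this.contDiffOn
    · apply ContDiffOn.div
      · exact (contDiff_const.mul contDiff_snd).contDiffOn
      · exact (contDiff_fst.pow 2).contDiffOn
      · intro p hp
        exact pow_ne_zero _ (ne_of_gt hp)

lemma exists_tendsto_of_deriv_bounded {f g : ℝ → ℝ} {T M : ℝ} (hT : 0 < T)
    (hderiv : ∀ t ∈ Ico 0 T, HasDerivAt f (g t) t) (hM : ∀ t ∈ Ico 0 T, |g t| ≤ M) :
    ∃ L, Tendsto f (𝓝[<] T) (𝓝 L) := by
  set M' : ℝ := max M 0 with hM'
  have hM'0 : 0 ≤ M' := le_max_right _ _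
  have hlip : LipschitzOnWith ⟨M', hM'0⟩ f (Ico 0 T) := by
    apply (convex_Ico 0 T).lipschitzOnWith_of_nnnorm_hasDerivWithin_le
      (f' := g) (fun t ht => (hderiv t ht).hasDerivWithinAt)
    intro t ht
    apply NNReal.coe_le_coe.mp
    simp only [coe_nnnorm, NNReal.coe_mk, Real.norm_eq_abs]
    exact (hM t ht).trans (le_max_left _ _)
  have hdist := lipschitzOnWith_iff_dist_le_mul.mp hlip
  have hc : Cauchy (map f (𝓝[<] T)) := by
    refine Metric.cauchy_iff.mpr ⟨map_neBot, fun ε hε => ?_⟩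
    set e : ℝ := ε / (M' + 1) with he
    have he0 : 0 < e := by positivity
    set c : ℝ := max 0 (T - e) with hc
    have hcT : c < T := by
      simp only [hc, max_lt_iff]
      constructor <;> linarith
    refine ⟨f '' Ioo c T, image_mem_map (Ioo_mem_nhdsLT_of_mem ⟨hcT, le_rfl⟩), ?_⟩
    rintro _ ⟨u, hu, rfl⟩ _ ⟨v, hv, rfl⟩
    have hus : u ∈ Ico 0 T := ⟨(le_max_left 0 _).trans hu.1.le, hu.2⟩
    have hvs : v ∈ Ico 0 T := ⟨(le_max_left 0 _).trans hv.1.le, hv.2⟩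
    have hduv : dist u v < e := by
      rw [Real.dist_eq, abs_lt]
      have : T - e ≤ c := le_max_right _ _
      constructor <;> linarith [hu.1, hu.2, hv.1, hv.2, this]
    calc dist (f u) (f v) ≤ M' * dist u v := hdist u hus v hvs
      _ ≤ M' * e := by nlinarith [dist_nonneg (x := u) (y := v)]
      _ < (M' + 1) * e := by nlinarith
      _ = ε := by rw [he]; field_simp
  obtain ⟨L, hL⟩ := CompleteSpace.complete hc
  exact ⟨L, hL⟩

lemma picard_exists_mapsTo {E : Type*} [NormedAddCommGroup E] [NormedSpace ℝ E] [CompleteSpace E]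
    {v : ℝ → E → E} {tMin t₀ tMax : ℝ} (ht₀ : t₀ ∈ Icc tMin tMax) (x₀ : E) {a L K : NNReal}
    (hpl : IsPicardLindelof v (⟨t₀, ht₀⟩ : Icc tMin tMax) x₀ a 0 L K) :
    ∃ f : ℝ → E, f t₀ = x₀ ∧ (∀ t, f t ∈ Metric.closedBall x₀ a) ∧
      ∀ t ∈ Icc tMin tMax, HasDerivWithinAt f (v t (f t)) (Icc tMin tMax) t := by
  obtain ⟨α, hα⟩ := ODE.FunSpace.exists_isFixedPt_next hpl (Metric.mem_closedBall_self le_rfl)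
  refine ⟨α.compProj, ?_, fun t => α.compProj_mem_closedBall hpl.mul_max_le, fun t ht ↦ ?_⟩
  · show α.compProj ((⟨t₀, ht₀⟩ : Icc tMin tMax) : ℝ) = x₀
    rw [ODE.FunSpace.compProj_val, ← hα, ODE.FunSpace.next_apply₀]
  apply ODE.hasDerivWithinAt_picard_Icc ht₀ hpl.continuousOn_uncurry
    α.continuous_compProj.continuousOn (fun _ ht' ↦ α.compProj_mem_closedBall hpl.mul_max_le)
    x₀ ht |>.congr_of_mem _ ht
  intro t' ht'
  nth_rw 1 [← hα]
  rw [ODE.FunSpace.compProj_of_mem ht', ODE.FunSpace.next_apply]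

lemma y_abs_bound {α β d v₀ : ℝ} (hα : 0 < α) (hβ : 0 < β) (hv₀ : 0 < v₀)
    {x y : ℝ → ℝ} {T : ℝ}
    (hsol : ∀ t ∈ Ico 0 T, 0 < x t ∧ HasDerivAt x (y t) t ∧
      HasDerivAt y (-α * (V (x t / d) - v₀ + y t) - β * y t / (x t) ^ 2) t) :
    ∀ t ∈ Ico 0 T, |y t| ≤ max |y 0| (2 + v₀) + 1 := by
  intro t ht
  set M : ℝ := max |y 0| (2 + v₀) + 1 with hMdef
  have hM1 : |y 0| < M := by
    have := le_max_left |y 0| (2 + v₀); simp only [hMdef]; linarith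
  have hM2 : 2 + v₀ + 1 ≤ M := by
    have := le_max_right |y 0| (2 + v₀); simp only [hMdef]; linarith
  have hM0 : 0 < M := by nlinarith [abs_nonneg (y 0)]
  have key := image_le_of_deriv_right_lt_deriv_boundary
      (f := fun u => y u ^ 2)
      (f' := fun u => 2 * y u * (-α * (V (x u / d) - v₀ + y u) - β * y u / (x u) ^ 2))
      (a := 0) (b := t) (B := fun _ => M ^ 2) (B' := fun _ => 0)
      ?hf ?hf' ?ha ?hB ?hbound
  case hf =>
    intro u hu
    have hu' : u ∈ Ico 0 T := ⟨hu.1, lt_of_le_of_lt hu.2 ht.2⟩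
    exact ((hsol u hu').2.2.differentiableAt.continuousAt.pow 2).continuousWithinAt
  case hf' =>
    intro u hu
    have hu' : u ∈ Ico 0 T := ⟨hu.1, lt_of_lt_of_le hu.2 ht.2.le⟩
    have hy := (hsol u hu').2.2
    have : HasDerivAt (fun u => y u ^ 2)
        (2 * y u * (-α * (V (x u / d) - v₀ + y u) - β * y u / (x u) ^ 2)) u := by
      have : HasDerivAt (fun u => y u ^ 2) _ u := hy.pow 2
      convert this using 1
      ring
    exact this.hasDerivWithinAt
  case ha =>
    show y 0 ^ 2 ≤ M ^ 2
    nlinarith [abs_nonneg (y 0), sq_abs (y 0)]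
  case hB => exact fun u => hasDerivAt_const u (M ^ 2)
  case hbound =>
    intro u hu heq
    have hu' : u ∈ Ico 0 T := ⟨hu.1, lt_of_lt_of_le hu.2 ht.2.le⟩
    obtain ⟨hxp, -, -⟩ := hsol u hu'
    have heq' : (y u - M) * (y u + M) = 0 := by
      have hsq : y u ^ 2 = M ^ 2 := heq
      nlinarith [hsq]
    have hW : |V (x u / d) - v₀| ≤ 2 + v₀ := by
      have h1 := abs_V_le (x u / d)
      have h2 : |V (x u / d) - v₀| ≤ |V (x u / d)| + |v₀| := abs_sub _ _
      rw [abs_of_pos hv₀] at h2; linarith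
    obtain ⟨hW1, hW2⟩ := abs_le.mp hW
    have hq : 0 ≤ y u * (β * y u / (x u) ^ 2) := by
      have h3 : y u * (β * y u / (x u) ^ 2) = β * (y u) ^ 2 / (x u) ^ 2 := by ring
      rw [h3]; positivity
    show 2 * y u * (-α * (V (x u / d) - v₀ + y u) - β * y u / (x u) ^ 2) < 0
    rcases mul_eq_zero.mp heq' with h | h
    · have hyu : y u = M := by linarith
      rw [hyu]
      have hA : 0 ≤ β * M / x u ^ 2 := by positivity
      have hin : -α * (V (x u / d) - v₀ + M) - β * M / x u ^ 2 ≤ -α := by nlinarith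
      have := mul_le_mul_of_nonneg_left hin (by positivity : (0:ℝ) ≤ 2 * M)
      nlinarith [mul_pos hM0 hα]
    · have hyu : y u = -M := by linarith
      rw [hyu]
      have hA : 0 ≤ β * M / x u ^ 2 := by positivity
      have hin : α ≤ -α * (V (x u / d) - v₀ + -M) - β * -M / x u ^ 2 := by
        have hBM : β * -M / x u ^ 2 = -(β * M / x u ^ 2) := by ring
        rw [hBM]
        nlinarith
      have hpos : 0 < -α * (V (x u / d) - v₀ + -M) - β * -M / x u ^ 2 := lt_of_lt_of_le hα hin
      nlinarith [mul_pos (mul_pos (show (0:ℝ) < 2 by norm_num) hM0) hpos]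
  have h2 : y t ^ 2 ≤ M ^ 2 := key ⟨ht.1, le_rfl⟩
  rw [abs_le]
  constructor <;> nlinarith [sq_nonneg (y t - M), sq_nonneg (y t + M)]

/-- a finite maximal time of definition `𝒯 < ∞` forces collision:
`x_t → 0` as `t → 𝒯⁻`. -/
theorem finite_time_implies_collision (α β d v₀ : ℝ)
    (hα : 0 < α) (hβ : 0 < β) (hd : 0 < d)
    (hv₀ : v₀ ∈ Set.Ioo 0 (1 + Real.tanh 2))
    (x y : ℝ → ℝ) (T : ℝ) (hT : 0 < T)
    (x₀ y₀ : ℝ) (hx₀ : 0 < x₀) (hinit : x 0 = x₀ ∧ y 0 = y₀)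
    (hsol : IsSol α β d v₀ x y (T : EReal))
    (hmax : IsMaximal α β d v₀ x y (T : EReal)) :
    Tendsto x (𝓝[<] T) (𝓝 0) := by
  have hsol' : ∀ t ∈ Ico 0 T, 0 < x t ∧ HasDerivAt x (y t) t ∧
      HasDerivAt y (-α * (V (x t / d) - v₀ + y t) - β * y t / (x t) ^ 2) t :=
    fun t ht => hsol t ht.1 (EReal.coe_lt_coe_iff.mpr ht.2)
  set M : ℝ := max |y 0| (2 + v₀) + 1 with hMdef
  have hM0 : 0 < M := by positivity
  have hybnd : ∀ t ∈ Ico 0 T, |y t| ≤ M := y_abs_bound hα hβ hv₀.1 hsol'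
  obtain ⟨L, hLx⟩ : ∃ L, Tendsto x (𝓝[<] T) (𝓝 L) :=
    exists_tendsto_of_deriv_bounded hT (fun t ht => (hsol' t ht).2.1) hybnd
  have hIooT : Ioo 0 T ∈ 𝓝[<] T := Ioo_mem_nhdsLT_of_mem ⟨hT, le_rfl⟩
  have hL0 : 0 ≤ L := by
    refine ge_of_tendsto hLx ?_
    filter_upwards [hIooT] with t ht
    exact (hsol' t ⟨ht.1.le, ht.2⟩).1.le
  rcases hL0.eq_or_lt with hL | hL
  · rwa [← hL] at hLx
  exfalso
  -- lower bound on x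
  obtain ⟨m, hm0, hmx⟩ : ∃ m > 0, ∀ t ∈ Ico 0 T, m ≤ x t := by
    have hev : ∀ᶠ t in 𝓝[<] T, L / 2 < x t :=
      hLx.eventually (eventually_gt_nhds (by linarith))
    obtain ⟨c, hcT, hc⟩ := (nhdsLT_basis T).eventually_iff.mp hev
    set c' : ℝ := max c 0 with hc'
    have hc'T : c' < T := max_lt hcT hT
    have hcont : ContinuousOn x (Icc 0 c') := by
      intro t ht
      have : t ∈ Ico 0 T := ⟨ht.1, lt_of_le_of_lt ht.2 hc'T⟩
      exact (hsol' t this).2.1.continuousAt.continuousWithinAt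
    obtain ⟨t₁, ht₁, hmin⟩ := isCompact_Icc.exists_isMinOn
      (nonempty_Icc.mpr (le_max_right c 0)) hcont
    have hxt₁ : 0 < x t₁ := (hsol' t₁ ⟨ht₁.1, lt_of_le_of_lt ht₁.2 hc'T⟩).1
    refine ⟨min (x t₁) (L / 2), lt_min hxt₁ (by linarith), fun t ht => ?_⟩
    rcases le_or_gt t c' with h | h
    · exact le_trans (min_le_left _ _) (hmin ⟨ht.1, h⟩)
    · exact le_trans (min_le_right _ _)
        (hc ⟨lt_of_le_of_lt (le_max_left c 0) h, ht.2⟩).le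
  -- limit of y
  obtain ⟨Ly, hLy⟩ : ∃ Ly, Tendsto y (𝓝[<] T) (𝓝 Ly) := by
    apply exists_tendsto_of_deriv_bounded (M := α * (2 + v₀ + M) + β * M / m ^ 2) hT
      (fun t ht => (hsol' t ht).2.2)
    intro t ht
    have hxm : m ≤ x t := hmx t ht
    have hyM : |y t| ≤ M := hybnd t ht
    have hW : |V (x t / d) - v₀| ≤ 2 + v₀ := by
      have h1 := abs_V_le (x t / d)
      have h2 : |V (x t / d) - v₀| ≤ |V (x t / d)| + |v₀| := abs_sub _ _
      rw [abs_of_pos hv₀.1] at h2; linarith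
    have htri : |(-α * (V (x t / d) - v₀ + y t) - β * y t / x t ^ 2)|
        ≤ |α * (V (x t / d) - v₀ + y t)| + |β * y t / x t ^ 2| := by
      calc |(-α * (V (x t / d) - v₀ + y t) - β * y t / x t ^ 2)|
          = |α * (V (x t / d) - v₀ + y t) + β * y t / x t ^ 2| := by
            rw [← abs_neg]; ring_nf
        _ ≤ _ := abs_add_le _ _
    have h3 : |α * (V (x t / d) - v₀ + y t)| ≤ α * (2 + v₀ + M) := by
      rw [abs_mul, abs_of_pos hα]
      apply mul_le_mul_of_nonneg_left ?_ hα.le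
      calc |V (x t / d) - v₀ + y t| ≤ |V (x t / d) - v₀| + |y t| := abs_add_le _ _
        _ ≤ 2 + v₀ + M := by linarith
    have h4 : |β * y t / x t ^ 2| ≤ β * M / m ^ 2 := by
      rw [abs_div, abs_mul, abs_of_pos hβ, abs_of_pos (pow_pos (hsol' t ht).1 2)]
      apply div_le_div₀ (by positivity) (by nlinarith [abs_nonneg (y t)]) (by positivity)
      nlinarith [hm0, (hsol' t ht).1]
    linarith
  -- the planar solution
  set F : ℝ × ℝ → ℝ × ℝ := Bf α β d v₀ with hF
  set z : ℝ → ℝ × ℝ := fun t => (x t, y t) with hz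
  have hzD : ∀ t ∈ Ico 0 T, HasDerivAt z (F (z t)) t :=
    fun t ht => ((hsol' t ht).2.1).prodMk ((hsol' t ht).2.2)
  set p : ℝ × ℝ := (L, Ly) with hp
  have hzt : Tendsto z (𝓝[<] T) (𝓝 p) := hLx.prodMk_nhds hLy
  -- Lipschitz neighborhood
  have hopen : IsOpen {q : ℝ × ℝ | 0 < q.1} := isOpen_lt continuous_const continuous_fst
  have hcd : ContDiffAt ℝ 1 F p :=
    (contDiffOn_Bf α β d v₀).contDiffAt (hopen.mem_nhds (by simpa [hp] using hL))
  obtain ⟨K, u, hu, hlip⟩ := hcd.exists_lipschitzOnWith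
  obtain ⟨r₁, hr₁, hball⟩ := Metric.mem_nhds_iff.mp hu
  set r : ℝ := min (r₁ / 4) (L / 4) with hr
  have hr0 : 0 < r := lt_min (by linarith) (by linarith)
  have hsub1 : Metric.closedBall p (2 * r) ⊆ u := by
    refine subset_trans (Metric.closedBall_subset_ball ?_) hball
    have := min_le_left (r₁ / 4) (L / 4); nlinarith [min_le_left (r₁ / 4) (L / 4)]
  have hsubpos : ∀ q ∈ Metric.closedBall p (2 * r), L / 4 ≤ q.1 := by
    intro q hq
    have h1 : |q.1 - L| ≤ 2 * r := by
      have := le_trans (le_max_left (dist q.1 p.1) (dist q.2 p.2))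
        (le_of_eq (Prod.dist_eq (x := q) (y := p)).symm)
      have h2 : dist q p ≤ 2 * r := Metric.mem_closedBall.mp hq
      rw [Real.dist_eq] at this
      simp only [hp] at this ⊢
      exact le_trans this h2
    have h3 : 2 * r ≤ L / 2 := by
      have := min_le_right (r₁ / 4) (L / 4); simp only [hr]; linarith
    rw [abs_le] at h1
    linarith [h1.1, hL]
  -- bound on F
  obtain ⟨C, hC⟩ : ∃ C, ∀ q ∈ Metric.closedBall p (2 * r), ‖F q‖ ≤ C := by
    apply (isCompact_closedBall p (2 * r)).exists_bound_of_continuousOn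
    exact (contDiffOn_Bf α β d v₀).continuousOn.mono
      (fun q hq => lt_of_lt_of_le (by linarith) (hsubpos q hq))
  set C' : ℝ := max C 1 with hC'
  have hC'0 : 0 < C' := lt_of_lt_of_le one_pos (le_max_right _ _)
  set a : ℝ := r / C' with ha
  have ha0 : 0 < a := by positivity
  -- choice of s
  obtain ⟨δ, hδ0, hδ⟩ := Metric.tendsto_nhdsWithin_nhds.mp hzt r hr0
  set e : ℝ := min δ (min (a / 2) T) / 2 with he
  have he0 : 0 < e := by positivity
  have heδ : e < δ := by
    have h1 := min_le_left δ (min (a / 2) T); simp only [he]; linarith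
  have hea : e ≤ a / 4 := by
    have h1 := min_le_right δ (min (a / 2) T)
    have h2 := min_le_left (a / 2) T
    simp only [he]; linarith
  have heT : e ≤ T / 2 := by
    have h1 := min_le_right δ (min (a / 2) T)
    have h2 := min_le_right (a / 2) T
    simp only [he]; linarith
  set s : ℝ := T - e with hs
  have hs0 : 0 ≤ s := by simp only [hs]; linarith
  have hsT : s < T := by simp only [hs]; linarith
  have hsa : T + a / 2 ≤ s + a := by simp only [hs]; linarith
  have hzball : ∀ t, s ≤ t → t < T → z t ∈ Metric.closedBall p r := by
    intro t h1 h2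
    refine Metric.mem_closedBall.mpr (le_of_lt (hδ h2 ?_))
    rw [Real.dist_eq, abs_lt]
    constructor <;> simp only [hs] at h1 <;> linarith
  -- Picard–Lindelöf
  set q : ℝ × ℝ := z s with hq
  have hqball : q ∈ Metric.closedBall p r := hzball s le_rfl hsT
  have hsub2 : Metric.closedBall q r ⊆ Metric.closedBall p (2 * r) := by
    apply Metric.closedBall_subset_closedBall'
    have := Metric.mem_closedBall.mp hqball
    linarith
  have hs₀ : s ∈ Icc s (s + a) := ⟨le_rfl, by linarith⟩
  have hpl : IsPicardLindelof (fun _ => F) (⟨s, hs₀⟩ : Icc s (s + a)) q ⟨r, hr0.le⟩ 0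
      ⟨C', hC'0.le⟩ K :=
    { lipschitzOnWith := fun t _ => hlip.mono (subset_trans hsub2 hsub1)
      continuousOn := fun _ _ => continuousOn_const
      norm_le := fun t _ q' hq' => le_trans (hC q' (hsub2 hq')) (le_max_left _ _)
      mul_max_le := by
        show C' * max (s + a - s) (s - s) ≤ r - 0
        rw [show s + a - s = a by ring, show s - s = 0 by ring, max_eq_left ha0.le, ha]
        rw [mul_div_cancel₀ _ hC'0.ne', sub_zero]  }
  obtain ⟨w, hws, hwball, hwderiv⟩ := picard_exists_mapsTo hs₀ q hpl
  have hwmem : ∀ t, w t ∈ Metric.closedBall p (2 * r) := fun t => hsub2 (hwball t)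
  have hwD : ∀ t ∈ Ioo s (s + a), HasDerivAt w (F (w t)) t :=
    fun t ht => (hwderiv t (Ioo_subset_Icc_self ht)).hasDerivAt (Icc_mem_nhds ht.1 ht.2)
  -- uniqueness on [s, T)
  have huniq : ∀ t, s ≤ t → t < T → z t = w t := by
    intro b hb1 hb2
    have hv : ∀ t : ℝ, LipschitzOnWith K ((fun _ : ℝ => F) t)
        ((fun _ : ℝ => Metric.closedBall p (2 * r)) t) := fun _ => hlip.mono hsub1
    have hfc : ContinuousOn z (Icc s b) := by
      intro t ht
      exact (hzD t ⟨le_trans hs0 ht.1, lt_of_le_of_lt ht.2 hb2⟩).continuousAt.continuousWithinAt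
    have hf' : ∀ t ∈ Ico s b, HasDerivWithinAt z (F (z t)) (Ici t) t := fun t ht =>
      (hzD t ⟨le_trans hs0 ht.1, lt_trans ht.2 hb2⟩).hasDerivWithinAt
    have hfs : ∀ t ∈ Ico s b, z t ∈ Metric.closedBall p (2 * r) := fun t ht =>
      Metric.closedBall_subset_closedBall (by linarith) (hzball t ht.1 (lt_trans ht.2 hb2))
    have hgc : ContinuousOn w (Icc s b) := by
      intro t ht
      have htm : t ∈ Icc s (s + a) := ⟨ht.1, by linarith [ht.2, hb2.le]⟩
      exact ((hwderiv t htm).continuousWithinAt).mono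
        (Icc_subset_Icc le_rfl (by linarith [hb2.le]))
    have hg' : ∀ t ∈ Ico s b, HasDerivWithinAt w (F (w t)) (Ici t) t := by
      intro t ht
      have hta : t < s + a := by linarith [ht.2, hb2]
      refine (hwderiv t ⟨ht.1, hta.le⟩).mono_of_mem_nhdsWithin ?_
      rw [mem_nhdsWithin]
      exact ⟨Iio (s + a), isOpen_Iio, hta, fun u hu => ⟨le_trans ht.1 hu.2, hu.1.le⟩⟩
    have hgs : ∀ t ∈ Ico s b, w t ∈ Metric.closedBall p (2 * r) := fun t _ => hwmem t
    have hinit' : z s = w s := by rw [hws]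
    exact ODE_solution_unique_of_mem_Icc_right (fun t _ => hv t) hfc hf' hfs hgc hg' hgs hinit'
      ⟨hb1, le_rfl⟩
  -- glue and contradict maximality
  set T' : ℝ := T + a / 4 with hT'd
  have hT'sa : T' < s + a := by simp only [hT'd]; linarith
  refine hmax (T' : EReal) (fun t => if t < T then x t else (w t).1)
    (fun t => if t < T then y t else (w t).2)
    (EReal.coe_lt_coe_iff.mpr (by simp only [hT'd]; linarith)) ?_ ?_ ?_
  · intro t ht0 htT'
    have htT'2 : t < T' := EReal.coe_lt_coe_iff.mp htT'
    by_cases hcase : t < T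
    · obtain ⟨h1, h2, h3⟩ := hsol' t ⟨ht0, hcase⟩
      have hex : (fun u => if u < T then x u else (w u).1) =ᶠ[𝓝 t] x := by
        filter_upwards [Iio_mem_nhds hcase] with u hu
        exact if_pos hu
      have hey : (fun u => if u < T then y u else (w u).2) =ᶠ[𝓝 t] y := by
        filter_upwards [Iio_mem_nhds hcase] with u hu
        exact if_pos hu
      refine ⟨?_, ?_, ?_⟩
      · simpa only [if_pos hcase] using h1
      · simp only [if_pos hcase]
        exact h2.congr_of_eventuallyEq hex
      · simp only [if_pos hcase]
        exact h3.congr_of_eventuallyEq hey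
    · push_neg at hcase
      have htIoo : t ∈ Ioo s (s + a) := ⟨lt_of_lt_of_le hsT hcase, lt_trans htT'2 hT'sa⟩
      have hwt := hwD t htIoo
      have hglue : ∀ u ∈ Ioo s (s + a),
          ((if u < T then x u else (w u).1), (if u < T then y u else (w u).2)) = w u := by
        intro u hu
        by_cases hu2 : u < T
        · simp only [if_pos hu2]
          exact huniq u hu.1.le hu2
        · simp only [if_neg hu2]
      have hex : (fun u => if u < T then x u else (w u).1) =ᶠ[𝓝 t] (fun u => (w u).1) := by
        filter_upwards [Ioo_mem_nhds htIoo.1 htIoo.2] with u hu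
        exact congrArg Prod.fst (hglue u hu)
      have hey : (fun u => if u < T then y u else (w u).2) =ᶠ[𝓝 t] (fun u => (w u).2) := by
        filter_upwards [Ioo_mem_nhds htIoo.1 htIoo.2] with u hu
        exact congrArg Prod.snd (hglue u hu)
      have hD1 : HasDerivAt (fun u => (w u).1) ((F (w t)).1) t :=
        (ContinuousLinearMap.fst ℝ ℝ ℝ).hasFDerivAt.comp_hasDerivAt t hwt
      have hD2 : HasDerivAt (fun u => (w u).2) ((F (w t)).2) t :=
        (ContinuousLinearMap.snd ℝ ℝ ℝ).hasFDerivAt.comp_hasDerivAt t hwt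
      have hnlt : ¬ t < T := not_lt.mpr hcase
      have hwpos : L / 4 ≤ (w t).1 := hsubpos (w t) (hwmem t)
      refine ⟨?_, ?_, ?_⟩
      · simp only [if_neg hnlt]; linarith
      · simp only [if_neg hnlt]
        exact hD1.congr_of_eventuallyEq hex
      · simp only [if_neg hnlt]
        exact hD2.congr_of_eventuallyEq hey
  · exact if_pos hT
  · exact if_pos hT
end
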